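/- Fix α ∈ (1,2). Let (D(r), r > 0) be a stochastic process with values in the natural numbers such that almost surely the map r ↦ D(r) is nonincreasing, and such that for every r > 0 the random variable D(r) has the Poisson distribution with parameter ((α−1)r)^{−1/(α−1)}. Then for every ε > 0, almost surely lim_{r → 0⁺} (D(r) − ((α−1)r)^{−1/(α−1)}) / r^{−1/(2(α−1))−ε} = 0. -/

import Mathlib

open MeasureTheory ProbabilityTheory Filter Set Topology

lemma tsum_pow_div_factorial_eq (x : ℝ) :
    ∑' n : ℕ, x ^ n / n.factorial = Real.exp x := by
  rw [Real.exp_eq_exp_ℝ, NormedSpace.exp_eq_tsum_div]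

lemma poisson_tail_ge {Ω : Type*} [MeasureSpace Ω]
    (X : Ω → ℕ) (lam x t : ℝ) (hlam : 0 ≤ lam) (ht : 0 ≤ t)
    (hp : ∀ k : ℕ, ℙ {ω | X ω = k} =
      ENNReal.ofReal (Real.exp (-lam) * lam ^ k / (Nat.factorial k))) :
    ℙ {ω | lam + x ≤ (X ω : ℝ)} ≤
      ENNReal.ofReal (Real.exp (lam * (Real.exp t - 1) - t * (lam + x))) := by
  set f : ℕ → ℝ := fun k =>
    Real.exp (t * k - t * (lam + x)) * (Real.exp (-lam) * lam ^ k / (Nat.factorial k)) with hf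
  have hfnn : ∀ k, 0 ≤ f k := by
    intro k
    have : (0:ℝ) ≤ lam ^ k := pow_nonneg hlam k
    positivity
  have key : f = fun k => ((Real.exp (t * (lam + x)))⁻¹ * Real.exp (-lam)) *
      ((lam * Real.exp t) ^ k / (Nat.factorial k)) := by
    funext k
    simp only [hf]
    rw [Real.exp_sub, mul_pow, ← Real.exp_nat_mul, mul_comm (k:ℝ) t]
    ring
  have hfs : Summable f := by
    rw [key]
    exact (Real.summable_pow_div_factorial _).mul_left _
  have hsum : ∑' k, f k = Real.exp (lam * (Real.exp t - 1) - t * (lam + x)) := by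
    rw [key, tsum_mul_left, tsum_pow_div_factorial_eq, ← Real.exp_neg, ← Real.exp_add,
      ← Real.exp_add]
    congr 1
    ring
  have hsub : {ω | lam + x ≤ (X ω : ℝ)} ⊆
      ⋃ k : ℕ, {ω | X ω = k ∧ lam + x ≤ (k : ℝ)} := by
    intro ω hω
    exact mem_iUnion.2 ⟨X ω, rfl, hω⟩
  calc ℙ {ω | lam + x ≤ (X ω : ℝ)}
      ≤ ∑' k : ℕ, ℙ {ω | X ω = k ∧ lam + x ≤ (k : ℝ)} :=
        (measure_mono hsub).trans (measure_iUnion_le _)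
    _ ≤ ∑' k : ℕ, ENNReal.ofReal (f k) := by
        refine ENNReal.tsum_le_tsum fun k => ?_
        by_cases h : lam + x ≤ (k : ℝ)
        · have he : {ω | X ω = k ∧ lam + x ≤ (k : ℝ)} = {ω | X ω = k} := by
            ext ω; simp [h]
          rw [he, hp k]
          refine ENNReal.ofReal_le_ofReal ?_
          have h1 : (1:ℝ) ≤ Real.exp (t * k - t * (lam + x)) := by
            refine Real.one_le_exp ?_
            have : t * (lam + x) ≤ t * k := mul_le_mul_of_nonneg_left h ht
            linarith
          have h2 : (0:ℝ) ≤ Real.exp (-lam) * lam ^ k / (Nat.factorial k) := by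
            have : (0:ℝ) ≤ lam ^ k := pow_nonneg hlam k
            positivity
          exact le_mul_of_one_le_left h2 h1
        · have he : {ω | X ω = k ∧ lam + x ≤ (k : ℝ)} = (∅ : Set Ω) := by
            ext ω; simp [h]
          rw [he, measure_empty]
          exact zero_le
    _ = ENNReal.ofReal (∑' k, f k) := (ENNReal.ofReal_tsum_of_nonneg hfnn hfs).symm
    _ = _ := by rw [hsum]

lemma poisson_tail_le {Ω : Type*} [MeasureSpace Ω]
    (X : Ω → ℕ) (lam x t : ℝ) (hlam : 0 ≤ lam) (ht : 0 ≤ t)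
    (hp : ∀ k : ℕ, ℙ {ω | X ω = k} =
      ENNReal.ofReal (Real.exp (-lam) * lam ^ k / (Nat.factorial k))) :
    ℙ {ω | (X ω : ℝ) ≤ lam - x} ≤
      ENNReal.ofReal (Real.exp (lam * (Real.exp (-t) - 1) + t * (lam - x))) := by
  set f : ℕ → ℝ := fun k =>
    Real.exp (t * (lam - x) - t * k) * (Real.exp (-lam) * lam ^ k / (Nat.factorial k)) with hf
  have hfnn : ∀ k, 0 ≤ f k := by
    intro k
    have : (0:ℝ) ≤ lam ^ k := pow_nonneg hlam k
    positivity
  have key : f = fun k => ((Real.exp (t * (lam - x))) * Real.exp (-lam)) *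
      ((lam * Real.exp (-t)) ^ k / (Nat.factorial k)) := by
    funext k
    simp only [hf]
    rw [Real.exp_sub, mul_pow, ← Real.exp_nat_mul, mul_neg, mul_comm (k:ℝ) t,
      Real.exp_neg (t * (k:ℝ))]
    ring
  have hfs : Summable f := by
    rw [key]
    exact (Real.summable_pow_div_factorial _).mul_left _
  have hsum : ∑' k, f k = Real.exp (lam * (Real.exp (-t) - 1) + t * (lam - x)) := by
    rw [key, tsum_mul_left, tsum_pow_div_factorial_eq, ← Real.exp_add, ← Real.exp_add]
    congr 1
    ring
  have hsub : {ω | (X ω : ℝ) ≤ lam - x} ⊆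
      ⋃ k : ℕ, {ω | X ω = k ∧ (k : ℝ) ≤ lam - x} := by
    intro ω hω
    exact mem_iUnion.2 ⟨X ω, rfl, hω⟩
  calc ℙ {ω | (X ω : ℝ) ≤ lam - x}
      ≤ ∑' k : ℕ, ℙ {ω | X ω = k ∧ (k : ℝ) ≤ lam - x} :=
        (measure_mono hsub).trans (measure_iUnion_le _)
    _ ≤ ∑' k : ℕ, ENNReal.ofReal (f k) := by
        refine ENNReal.tsum_le_tsum fun k => ?_
        by_cases h : (k : ℝ) ≤ lam - x
        · have he : {ω | X ω = k ∧ (k : ℝ) ≤ lam - x} = {ω | X ω = k} := by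
            ext ω; simp [h]
          rw [he, hp k]
          refine ENNReal.ofReal_le_ofReal ?_
          have h1 : (1:ℝ) ≤ Real.exp (t * (lam - x) - t * k) := by
            refine Real.one_le_exp ?_
            have : t * k ≤ t * (lam - x) := mul_le_mul_of_nonneg_left h ht
            linarith
          have h2 : (0:ℝ) ≤ Real.exp (-lam) * lam ^ k / (Nat.factorial k) := by
            have : (0:ℝ) ≤ lam ^ k := pow_nonneg hlam k
            positivity
          exact le_mul_of_one_le_left h2 h1
        · have he : {ω | X ω = k ∧ (k : ℝ) ≤ lam - x} = (∅ : Set Ω) := by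
            ext ω; simp [h]
          rw [he, measure_empty]
          exact zero_le
    _ = ENNReal.ofReal (∑' k, f k) := (ENNReal.ofReal_tsum_of_nonneg hfnn hfs).symm
    _ = _ := by rw [hsum]

lemma poisson_dev {Ω : Type*} [MeasureSpace Ω]
    (X : Ω → ℕ) (lam x : ℝ) (hlam : 0 < lam) (hx : 0 ≤ x) (hx2 : x ≤ 2 * lam)
    (hp : ∀ k : ℕ, ℙ {ω | X ω = k} =
      ENNReal.ofReal (Real.exp (-lam) * lam ^ k / (Nat.factorial k))) :
    ℙ {ω | x ≤ |(X ω : ℝ) - lam|} ≤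
      ENNReal.ofReal (2 * Real.exp (-(x ^ 2 / (4 * lam)))) := by
  set t := x / (2 * lam) with htdef
  have ht0 : 0 ≤ t := by positivity
  have ht1 : t ≤ 1 := by
    rw [htdef, div_le_one (by positivity)]
    linarith
  have hexp2 : ∀ u : ℝ, |u| ≤ 1 → Real.exp u ≤ 1 + u + 3 / 4 * u ^ 2 := by
    intro u hu
    have h := Real.exp_bound hu (n := 2) (by norm_num)
    have hs : ∑ m ∈ Finset.range 2, u ^ m / m.factorial = 1 + u := by
      simp [Finset.sum_range_succ]
    rw [hs] at h
    have h' := (abs_sub_le_iff.1 h).1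
    norm_num [Nat.factorial] at h'
    nlinarith [sq_abs u, h']
  have habs : |t| ≤ 1 := by rwa [abs_of_nonneg ht0]
  have habsn : |(-t)| ≤ 1 := by rwa [abs_neg, abs_of_nonneg ht0]
  have hup : lam * (Real.exp t - 1) - t * (lam + x) ≤ -(x ^ 2 / (4 * lam)) := by
    have h2 := hexp2 t habs
    have key : lam * (3 / 4 * t ^ 2) - t * x ≤ -(x ^ 2 / (4 * lam)) := by
      have h4 : lam * (3 / 4 * t ^ 2) - t * x = -(5 / 16) * (x ^ 2 / lam) := by
        rw [htdef]; field_simp; ring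
      have h5 : -(x ^ 2 / (4 * lam)) = -(1 / 4) * (x ^ 2 / lam) := by ring
      rw [h4, h5]
      have h6 : 0 ≤ x ^ 2 / lam := div_nonneg (sq_nonneg x) hlam.le
      linarith
    nlinarith
  have hlo : lam * (Real.exp (-t) - 1) + t * (lam - x) ≤ -(x ^ 2 / (4 * lam)) := by
    have h2 := hexp2 (-t) habsn
    have key : lam * (3 / 4 * t ^ 2) - t * x ≤ -(x ^ 2 / (4 * lam)) := by
      have h4 : lam * (3 / 4 * t ^ 2) - t * x = -(5 / 16) * (x ^ 2 / lam) := by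
        rw [htdef]; field_simp; ring
      have h5 : -(x ^ 2 / (4 * lam)) = -(1 / 4) * (x ^ 2 / lam) := by ring
      rw [h4, h5]
      have h6 : 0 ≤ x ^ 2 / lam := div_nonneg (sq_nonneg x) hlam.le
      linarith
    nlinarith
  have hsub : {ω | x ≤ |(X ω : ℝ) - lam|} ⊆
      {ω | lam + x ≤ (X ω : ℝ)} ∪ {ω | (X ω : ℝ) ≤ lam - x} := by
    intro ω hω
    simp only [mem_setOf_eq, mem_union] at *
    rcases abs_cases ((X ω : ℝ) - lam) with ⟨h1, _⟩ | ⟨h1, _⟩ <;> rw [h1] at hω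
    · left; linarith
    · right; linarith
  calc ℙ {ω | x ≤ |(X ω : ℝ) - lam|}
      ≤ ℙ ({ω | lam + x ≤ (X ω : ℝ)} ∪ {ω | (X ω : ℝ) ≤ lam - x}) := measure_mono hsub
    _ ≤ ℙ {ω | lam + x ≤ (X ω : ℝ)} + ℙ {ω | (X ω : ℝ) ≤ lam - x} := measure_union_le _ _
    _ ≤ ENNReal.ofReal (Real.exp (lam * (Real.exp t - 1) - t * (lam + x))) +
        ENNReal.ofReal (Real.exp (lam * (Real.exp (-t) - 1) + t * (lam - x))) :=
          add_le_add (poisson_tail_ge X lam x t hlam.le ht0 hp)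
            (poisson_tail_le X lam x t hlam.le ht0 hp)
    _ ≤ ENNReal.ofReal (Real.exp (-(x ^ 2 / (4 * lam)))) +
        ENNReal.ofReal (Real.exp (-(x ^ 2 / (4 * lam)))) :=
          add_le_add (ENNReal.ofReal_le_ofReal (Real.exp_le_exp.2 hup))
            (ENNReal.ofReal_le_ofReal (Real.exp_le_exp.2 hlo))
    _ = ENNReal.ofReal (2 * Real.exp (-(x ^ 2 / (4 * lam)))) := by
          rw [← ENNReal.ofReal_add (Real.exp_pos _).le (Real.exp_pos _).le]
          congr 1
          ring

lemma summable_exp_neg_rpow (s : ℝ) (hs : 0 < s) :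
    Summable (fun n : ℕ => Real.exp (-(((n : ℝ) + 1) ^ s / 4))) := by
  set m : ℕ := ⌈2 / s⌉₊ with hm
  have hms : 2 ≤ s * m := by
    have h1 : 2 / s ≤ (m : ℝ) := Nat.le_ceil _
    have := mul_le_mul_of_nonneg_left h1 hs.le
    rwa [mul_div_cancel₀ _ hs.ne'] at this
  have main : ∀ n : ℕ, Real.exp (-(((n : ℝ) + 1) ^ s / 4)) ≤
      ((m.factorial : ℝ) * 4 ^ m) * ((n : ℝ) + 1) ^ (-(2 : ℝ)) := by
    intro n
    have hn1 : (0 : ℝ) < (n : ℝ) + 1 := by positivity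
    have hn1' : (1 : ℝ) ≤ (n : ℝ) + 1 := by
      have : (0:ℝ) ≤ (n:ℝ) := Nat.cast_nonneg n
      linarith
    set y : ℝ := ((n : ℝ) + 1) ^ s with hy
    have hy0 : 0 < y := Real.rpow_pos_of_pos hn1 s
    have h1 : (y / 4) ^ m / m.factorial ≤ Real.exp (y / 4) := by
      calc (y / 4) ^ m / m.factorial
          ≤ ∑ i ∈ Finset.range (m + 1), (y / 4) ^ i / i.factorial := by
            refine Finset.single_le_sum (f := fun i => (y / 4) ^ i / (i.factorial : ℝ))
              (fun i _ => by positivity) (Finset.self_mem_range_succ m)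
        _ ≤ Real.exp (y / 4) := Real.sum_le_exp_of_nonneg (by positivity) _
    have h2 : Real.exp (-(y / 4)) ≤ ((m.factorial : ℝ) * 4 ^ m) / y ^ m := by
      rw [Real.exp_neg]
      have hpos : (0 : ℝ) < (y / 4) ^ m / m.factorial := by positivity
      have h3 : (Real.exp (y / 4))⁻¹ ≤ ((y / 4) ^ m / (m.factorial : ℝ))⁻¹ :=
        inv_anti₀ hpos h1
      refine h3.trans (le_of_eq ?_)
      rw [div_pow]
      field_simp
    have h4 : ((n : ℝ) + 1) ^ (2 : ℝ) ≤ y ^ m := by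
      rw [hy, ← Real.rpow_natCast (((n : ℝ) + 1) ^ s) m, ← Real.rpow_mul hn1.le]
      exact Real.rpow_le_rpow_of_exponent_le hn1' hms
    have h5 : ((m.factorial : ℝ) * 4 ^ m) / y ^ m ≤
        ((m.factorial : ℝ) * 4 ^ m) / ((n : ℝ) + 1) ^ (2 : ℝ) := by
      refine div_le_div_of_nonneg_left (by positivity) (by positivity) h4
    refine h2.trans (h5.trans (le_of_eq ?_))
    rw [Real.rpow_neg hn1.le, div_eq_mul_inv]
  have hsummable : Summable (fun n : ℕ => ((n : ℝ) + 1) ^ (-(2 : ℝ))) := by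
    have h := (Real.summable_nat_rpow (p := (-(2 : ℝ)))).mpr (by norm_num)
    have h2 := (summable_nat_add_iff (f := fun n : ℕ => (n : ℝ) ^ (-(2 : ℝ))) 1).mpr h
    refine h2.congr fun n => ?_
    push_cast
    ring_nf
  exact Summable.of_nonneg_of_le (fun n => (Real.exp_pos _).le) main (hsummable.mul_left _)

set_option maxHeartbeats 1000000 in
theorem aux
    {Ω : Type*} [MeasureSpace Ω] [IsProbabilityMeasure (ℙ : Measure Ω)]
    (α : ℝ) (hα : α ∈ Ioo (1:ℝ) 2)
    (D : ℝ → Ω → ℕ)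
    (hmono : ∀ᵐ ω ∂ℙ, ∀ r s : ℝ, 0 < r → r ≤ s → D s ω ≤ D r ω)
    (hpois : ∀ r : ℝ, 0 < r → ∀ k : ℕ,
      ℙ {ω | D r ω = k} =
        ENNReal.ofReal (Real.exp (-(((α - 1) * r) ^ (-(1/(α - 1))))) *
          (((α - 1) * r) ^ (-(1/(α - 1)))) ^ k / (Nat.factorial k)))
    (ε : ℝ) (hε : 0 < ε) (hε1 : ε * (α - 1) ≤ 1) :
    ∀ᵐ ω ∂ℙ, Tendsto
      (fun r : ℝ => ((D r ω : ℝ) - ((α - 1) * r) ^ (-(1/(α - 1)))) /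
        r ^ (-(1/(2*(α - 1))) - ε))
      (𝓝[>] 0) (𝓝 0) := by
  obtain ⟨hα1, hα2⟩ := hα
  have ha0 : (0:ℝ) < α - 1 := by linarith
  have ha1 : α - 1 < 1 := by linarith
  have hγpos : (0:ℝ) < 1/(α-1) := by positivity
  set c : ℝ := (α - 1) ^ (-(1/(α - 1))) with hcdef
  have hc1 : 1 < c := by
    rw [hcdef, Real.one_lt_rpow_iff_of_pos ha0]
    exact Or.inr ⟨ha1, neg_lt_zero.mpr hγpos⟩
  have hc0 : (0:ℝ) < c := lt_trans one_pos hc1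
  set δ : ℝ := (α - 1) * ε / 2 with hδdef
  have hδ0 : 0 < δ := by positivity
  have hδhalf : δ ≤ 1/2 := by
    rw [hδdef]
    nlinarith [hε1]
  set rr : ℕ → ℝ := fun n => ((n:ℝ)) ^ (-(α - 1)) with hrrdef
  have hrrpos : ∀ n : ℕ, 1 ≤ n → 0 < rr n := by
    intro n hn
    have : (0:ℝ) < (n:ℝ) := by exact_mod_cast hn
    exact Real.rpow_pos_of_pos this _
  have hlam : ∀ n : ℕ, 1 ≤ n → ((α - 1) * rr n) ^ (-(1/(α - 1))) = c * n := by
    intro n hn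
    have hn0 : (0:ℝ) < (n:ℝ) := by exact_mod_cast hn
    rw [hrrdef]
    simp only
    rw [Real.mul_rpow ha0.le (Real.rpow_nonneg hn0.le _), ← Real.rpow_mul hn0.le]
    rw [hcdef]
    congr 1
    have : -(α-1) * -(1/(α-1)) = 1 := by field_simp
    rw [this, Real.rpow_one]
  set xx : ℕ → ℝ := fun k => Real.sqrt c * ((k:ℝ)) ^ ((1:ℝ)/2 + δ) with hxxdef
  have hxxnn : ∀ k, 0 ≤ xx k := fun k =>
    mul_nonneg (Real.sqrt_nonneg _) (Real.rpow_nonneg (Nat.cast_nonneg k) _)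
  -- probability bound
  have hprob : ∀ n : ℕ,
      ℙ {ω | xx (n+1) ≤ |(D (rr (n+1)) ω : ℝ) - c * ((n+1:ℕ):ℝ)|} ≤
        ENNReal.ofReal (2 * Real.exp (-(((n:ℝ)+1) ^ (2*δ) / 4))) := by
    intro n
    have hn1 : 1 ≤ n + 1 := Nat.succ_le_succ (Nat.zero_le n)
    have hm0 : (0:ℝ) < ((n+1:ℕ):ℝ) := by exact_mod_cast Nat.succ_pos n
    have hlampos : 0 < c * ((n+1:ℕ):ℝ) := by positivity
    have hzpow : ((n+1:ℕ):ℝ) ^ ((1:ℝ)/2 + δ) ≤ ((n+1:ℕ):ℝ) := by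
      have hge1 : (1:ℝ) ≤ ((n+1:ℕ):ℝ) := by exact_mod_cast Nat.succ_le_succ (Nat.zero_le n)
      have h1 : ((n+1:ℕ):ℝ) ^ ((1:ℝ)/2 + δ) ≤ ((n+1:ℕ):ℝ) ^ (1:ℝ) :=
        Real.rpow_le_rpow_of_exponent_le hge1 (by linarith)
      rwa [Real.rpow_one] at h1
    have hzpow0 : 0 ≤ ((n+1:ℕ):ℝ) ^ ((1:ℝ)/2 + δ) := Real.rpow_nonneg hm0.le _
    have hsqrtc : Real.sqrt c ≤ c :=
      (Real.sqrt_le_sqrt (by nlinarith)).trans_eq (Real.sqrt_sq hc0.le)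
    have hx2 : xx (n+1) ≤ 2 * (c * ((n+1:ℕ):ℝ)) := by
      rw [hxxdef]
      simp only
      nlinarith [Real.sqrt_nonneg c]
    have hpmf : ∀ k, ℙ {ω | D (rr (n+1)) ω = k} =
        ENNReal.ofReal (Real.exp (-(c * ((n+1:ℕ):ℝ))) * (c * ((n+1:ℕ):ℝ)) ^ k /
          (Nat.factorial k)) := by
      intro k
      have h := hpois (rr (n+1)) (hrrpos _ hn1) k
      rwa [hlam (n+1) hn1] at h
    have hdev := poisson_dev (D (rr (n+1))) (c * ((n+1:ℕ):ℝ)) (xx (n+1))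
      hlampos (hxxnn _) hx2 hpmf
    refine hdev.trans (le_of_eq ?_)
    congr 2
    -- xx(n+1)^2 / (4*(c*(n+1))) = ((n:ℝ)+1)^(2δ)/4
    have hsq : xx (n+1) ^ 2 = c * ((n+1:ℕ):ℝ) ^ ((1:ℝ) + 2*δ) := by
      rw [hxxdef]
      simp only
      rw [mul_pow, Real.sq_sqrt hc0.le]
      congr 1
      rw [← Real.rpow_natCast (((n+1:ℕ):ℝ) ^ ((1:ℝ)/2 + δ)) 2, ← Real.rpow_mul hm0.le]
      congr 1
      push_cast
      ring
    have hsplit : ((n+1:ℕ):ℝ) ^ ((1:ℝ) + 2*δ) = ((n+1:ℕ):ℝ) * ((n+1:ℕ):ℝ) ^ (2*δ) := by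
      rw [Real.rpow_add hm0, Real.rpow_one]
    have hcast : ((n+1:ℕ):ℝ) = (n:ℝ) + 1 := by push_cast; ring
    rw [hsq, hsplit, hcast]
    field_simp
  -- sum finite
  have hsum_ne : (∑' n : ℕ,
      ℙ {ω | xx (n+1) ≤ |(D (rr (n+1)) ω : ℝ) - c * ((n+1:ℕ):ℝ)|}) ≠ ⊤ := by
    have hs : Summable (fun n : ℕ => 2 * Real.exp (-(((n:ℝ)+1) ^ (2*δ) / 4))) :=
      (summable_exp_neg_rpow (2*δ) (by positivity)).mul_left 2
    refine ne_top_of_le_ne_top ?_ (ENNReal.tsum_le_tsum hprob)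
    rw [← ENNReal.ofReal_tsum_of_nonneg (fun n => by positivity) hs]
    exact ENNReal.ofReal_ne_top
  -- Borel-Cantelli
  have hBC : ∀ᵐ ω ∂ℙ, ∀ᶠ n in atTop,
      ¬ (xx (n+1) ≤ |(D (rr (n+1)) ω : ℝ) - c * ((n+1:ℕ):ℝ)|) := by
    have h0 := MeasureTheory.measure_setOf_frequently_eq_zero
      (p := fun n ω => xx (n+1) ≤ |(D (rr (n+1)) ω : ℝ) - c * ((n+1:ℕ):ℝ)|) hsum_ne
    rw [ae_iff]
    simp only [Filter.not_eventually, not_not]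
    exact h0
  filter_upwards [hmono, hBC] with ω hmω hfω
  -- deterministic part
  obtain ⟨N, hN⟩ := eventually_atTop.1 hfω
  have hdev : ∀ n : ℕ, N + 1 ≤ n → |(D (rr n) ω : ℝ) - c * (n:ℝ)| ≤ xx n := by
    intro n hn
    obtain ⟨m, rfl⟩ : ∃ m, n = m + 1 := ⟨n - 1, by omega⟩
    exact (not_le.1 (hN m (by omega))).le
  set β : ℝ := 1/(2*(α-1)) + ε with hβdef
  have hβ0 : 0 < β := by positivity
  have hw : (α - 1) * β = 1/2 + 2*δ := by
    rw [hβdef, hδdef]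
    field_simp
  set A : ℕ → ℝ := fun n => (xx n + xx (n+1) + c) * (n:ℝ) ^ (-((α-1)*β)) with hAdef
  have hAnn : ∀ n, 0 ≤ A n := fun n =>
    mul_nonneg (add_nonneg (add_nonneg (hxxnn n) (hxxnn (n+1))) hc0.le)
      (Real.rpow_nonneg (Nat.cast_nonneg n) _)
  -- A tends to 0
  have hAtend : Tendsto A atTop (𝓝 0) := by
    set K : ℝ := Real.sqrt c + Real.sqrt c * (2:ℝ) ^ ((1:ℝ)/2 + δ) + c with hKdef
    have hgt : Tendsto (fun n : ℕ => K * ((n:ℝ)) ^ (-δ)) atTop (𝓝 0) := by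
      have h1 : Tendsto (fun n : ℕ => ((n:ℝ)) ^ (-δ)) atTop (𝓝 0) :=
        (tendsto_rpow_neg_atTop hδ0).comp tendsto_natCast_atTop_atTop
      simpa using h1.const_mul K
    refine squeeze_zero_norm' ?_ hgt
    filter_upwards [eventually_ge_atTop 1] with n hn
    have hn0 : (0:ℝ) < (n:ℝ) := by exact_mod_cast hn
    rw [Real.norm_eq_abs, abs_of_nonneg (hAnn n)]
    have h2 : xx (n+1) ≤ Real.sqrt c * (2:ℝ) ^ ((1:ℝ)/2 + δ) * (n:ℝ) ^ ((1:ℝ)/2 + δ) := by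
      have hle : ((n+1:ℕ):ℝ) ^ ((1:ℝ)/2 + δ) ≤ (2:ℝ) ^ ((1:ℝ)/2 + δ) * (n:ℝ) ^ ((1:ℝ)/2 + δ) := by
        rw [← Real.mul_rpow (by norm_num) hn0.le]
        refine Real.rpow_le_rpow (by positivity) ?_ (by positivity)
        have hn1R : (1:ℝ) ≤ (n:ℝ) := by exact_mod_cast hn
        push_cast
        linarith
      rw [hxxdef]
      simp only
      rw [mul_assoc]
      exact mul_le_mul_of_nonneg_left hle (Real.sqrt_nonneg c)
    have h3 : c ≤ c * (n:ℝ) ^ ((1:ℝ)/2 + δ) := by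
      nlinarith [Real.one_le_rpow (by exact_mod_cast hn : (1:ℝ) ≤ (n:ℝ))
        (by linarith : (0:ℝ) ≤ (1:ℝ)/2 + δ)]
    have hxn : xx n = Real.sqrt c * (n:ℝ) ^ ((1:ℝ)/2 + δ) := rfl
    have h4 : xx n + xx (n+1) + c ≤ K * (n:ℝ) ^ ((1:ℝ)/2 + δ) := by
      rw [hKdef]
      nlinarith [h2, h3, hxn]
    have h5 : A n ≤ K * (n:ℝ) ^ ((1:ℝ)/2 + δ) * (n:ℝ) ^ (-((α-1)*β)) := by
      rw [hAdef]
      exact mul_le_mul_of_nonneg_right h4 (Real.rpow_nonneg hn0.le _)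
    refine h5.trans (le_of_eq ?_)
    rw [mul_assoc, ← Real.rpow_add hn0, hw]
    congr 2
    ring
  -- floor tends to atTop
  have hrtop : Tendsto (fun r : ℝ => r ^ (-(1/(α-1)))) (𝓝[>] (0:ℝ)) atTop := by
    have h1 : Tendsto (fun r : ℝ => (r⁻¹) ^ (1/(α-1))) (𝓝[>] (0:ℝ)) atTop :=
      (tendsto_rpow_atTop hγpos).comp tendsto_inv_nhdsGT_zero
    refine h1.congr' ?_
    filter_upwards [self_mem_nhdsWithin] with r hr
    rw [Real.inv_rpow (le_of_lt hr), ← Real.rpow_neg (le_of_lt hr)]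
  have hnn : Tendsto (fun r : ℝ => ⌊r ^ (-(1/(α-1)))⌋₊) (𝓝[>] (0:ℝ)) atTop :=
    tendsto_nat_floor_atTop.comp hrtop
  refine squeeze_zero_norm' (a := fun r : ℝ => A ⌊r ^ (-(1/(α-1)))⌋₊) ?_ (hAtend.comp hnn)
  have hev1 : ∀ᶠ r in 𝓝[>] (0:ℝ), ((max (N+1) 1 : ℕ):ℝ) ≤ r ^ (-(1/(α-1))) :=
    hrtop.eventually (eventually_ge_atTop _)
  filter_upwards [hev1, self_mem_nhdsWithin] with r hge hr0
  have hr0' : (0:ℝ) < r := hr0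
  set n : ℕ := ⌊r ^ (-(1/(α-1)))⌋₊ with hndef
  have hnge : max (N+1) 1 ≤ n := Nat.le_floor hge
  have hn1 : 1 ≤ n := le_trans (le_max_right _ _) hnge
  have hnN : N + 1 ≤ n := le_trans (le_max_left _ _) hnge
  have hn0 : (0:ℝ) < (n:ℝ) := by exact_mod_cast hn1
  have hfl1 : (n:ℝ) ≤ r ^ (-(1/(α-1))) := Nat.floor_le (Real.rpow_nonneg hr0'.le _) 
  have hfl2 : r ^ (-(1/(α-1))) ≤ (n:ℝ) + 1 := (Nat.lt_floor_add_one _).le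
  have hexp1 : (-(1/(α-1))) * (-(α-1)) = 1 := by field_simp
  have hrle : r ≤ rr n := by
    have h := Real.rpow_le_rpow_of_nonpos hn0 hfl1 (by linarith : -(α-1) ≤ 0)
    rwa [← Real.rpow_mul hr0'.le, hexp1, Real.rpow_one] at h
  have hrge : rr (n+1) ≤ r := by
    have hpos : (0:ℝ) < r ^ (-(1/(α-1))) := Real.rpow_pos_of_pos hr0' _
    have h := Real.rpow_le_rpow_of_nonpos hpos hfl2 (by linarith : -(α-1) ≤ 0)
    rw [← Real.rpow_mul hr0'.le, hexp1, Real.rpow_one] at h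
    have hcast : ((n+1:ℕ):ℝ) = (n:ℝ) + 1 := by push_cast; ring
    rw [hrrdef]
    simp only
    rw [hcast]
    exact h
  have hrrn1pos : 0 < rr (n+1) := hrrpos _ (by omega)
  -- lam bounds
  have hlamr_le : ((α - 1) * r) ^ (-(1/(α - 1))) ≤ c * ((n+1:ℕ):ℝ) := by
    rw [← hlam (n+1) (by omega)]
    exact Real.rpow_le_rpow_of_nonpos (mul_pos ha0 hrrn1pos)
      (mul_le_mul_of_nonneg_left hrge ha0.le) (by linarith)
  have hlamr_ge : c * (n:ℝ) ≤ ((α - 1) * r) ^ (-(1/(α - 1))) := by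
    rw [← hlam n hn1]
    exact Real.rpow_le_rpow_of_nonpos (mul_pos ha0 hr0')
      (mul_le_mul_of_nonneg_left hrle ha0.le) (by linarith)
  -- D bounds
  have hD_le : (D r ω : ℝ) ≤ (D (rr (n+1)) ω : ℝ) :=
    Nat.cast_le.2 (hmω (rr (n+1)) r hrrn1pos hrge)
  have hD_ge : (D (rr n) ω : ℝ) ≤ (D r ω : ℝ) :=
    Nat.cast_le.2 (hmω r (rr n) hr0' hrle)
  -- numerator bound
  have d1 := abs_le.1 (hdev n hnN)
  have d2 := abs_le.1 (hdev (n+1) (by omega))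
  have hnum : |(D r ω : ℝ) - ((α - 1) * r) ^ (-(1/(α - 1)))| ≤ xx n + xx (n+1) + c := by
    rw [abs_le]
    have hcast : ((n+1:ℕ):ℝ) = (n:ℝ) + 1 := by push_cast; ring
    rw [hcast] at d2 hlamr_le
    constructor
    · nlinarith [hxxnn (n+1), d1.1, hlamr_le]
    · nlinarith [hxxnn n, d2.2, hlamr_ge]
  -- denominator
  have hden : r ^ (-(1/(2*(α-1))) - ε) = (r ^ β)⁻¹ := by
    rw [← Real.rpow_neg hr0'.le]
    congr 1
    rw [hβdef]
    ring
  have hrpowβ : (0:ℝ) < r ^ β := Real.rpow_pos_of_pos hr0' _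
  rw [Real.norm_eq_abs, abs_div, hden, abs_inv, abs_of_pos hrpowβ, div_eq_mul_inv, inv_inv]
  have hrrnβ : (rr n) ^ β = (n:ℝ) ^ (-((α-1)*β)) := by
    rw [hrrdef]
    simp only
    rw [← Real.rpow_mul hn0.le]
    congr 1
    ring
  have hrpow_le : r ^ β ≤ (n:ℝ) ^ (-((α-1)*β)) := by
    rw [← hrrnβ]
    exact Real.rpow_le_rpow hr0'.le hrle hβ0.le
  calc |(D r ω : ℝ) - ((α - 1) * r) ^ (-(1/(α - 1)))| * r ^ β
      ≤ (xx n + xx (n+1) + c) * ((n:ℝ) ^ (-((α-1)*β))) :=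
        mul_le_mul hnum hrpow_le hrpowβ.le
          (add_nonneg (add_nonneg (hxxnn n) (hxxnn (n+1))) hc0.le)
    _ = A n := rfl

/-- Fix `α ∈ (1,2)`. If `(D r, r > 0)` is an ℕ-valued process with a.s.
nonincreasing paths such that `D r` is Poisson distributed with parameter
`((α-1) r) ^ (-1/(α-1))` for every `r > 0`, then for every `ε > 0`, almost surely
`(D r - ((α-1) r) ^ (-1/(α-1))) / r ^ (-1/(2(α-1)) - ε) → 0` as `r → 0⁺`. -/
theorem poisson_blocks_clt_vanishing
    {Ω : Type*} [MeasureSpace Ω] [IsProbabilityMeasure (ℙ : Measure Ω)]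
    (α : ℝ) (hα : α ∈ Ioo (1:ℝ) 2)
    (D : ℝ → Ω → ℕ)
    (hmono : ∀ᵐ ω ∂ℙ, ∀ r s : ℝ, 0 < r → r ≤ s → D s ω ≤ D r ω)
    (hpois : ∀ r : ℝ, 0 < r → ∀ k : ℕ,
      ℙ {ω | D r ω = k} =
        ENNReal.ofReal (Real.exp (-(((α - 1) * r) ^ (-(1/(α - 1))))) *
          (((α - 1) * r) ^ (-(1/(α - 1)))) ^ k / (Nat.factorial k)))
    (ε : ℝ) (hε : 0 < ε) :
    ∀ᵐ ω ∂ℙ, Tendsto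
      (fun r : ℝ => ((D r ω : ℝ) - ((α - 1) * r) ^ (-(1/(α - 1)))) /
        r ^ (-(1/(2*(α - 1))) - ε))
      (𝓝[>] 0) (𝓝 0) := by
  have ha0 : (0:ℝ) < α - 1 := by
    have := hα.1
    linarith
  set ε' : ℝ := min ε (1/(α-1)) with hε'def
  have hε'0 : 0 < ε' := lt_min hε (by positivity)
  have hε'1 : ε' * (α - 1) ≤ 1 := by
    have h1 : ε' ≤ 1/(α-1) := min_le_right _ _
    have h2 : ε' * (α - 1) ≤ (1/(α-1)) * (α - 1) := mul_le_mul_of_nonneg_right h1 ha0.le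
    rwa [one_div, inv_mul_cancel₀ ha0.ne'] at h2
  have hε'ε : ε' ≤ ε := min_le_left _ _
  have haux := aux α hα D hmono hpois ε' hε'0 hε'1
  filter_upwards [haux] with ω hω
  have htd : Tendsto (fun r : ℝ =>
      ‖((D r ω : ℝ) - ((α - 1) * r) ^ (-(1/(α - 1)))) / r ^ (-(1/(2*(α - 1))) - ε')‖)
      (𝓝[>] (0:ℝ)) (𝓝 0) := by
    simpa using hω.norm
  refine squeeze_zero_norm' ?_ htd
  filter_upwards [Ioo_mem_nhdsGT_of_mem (⟨le_refl (0:ℝ), zero_lt_one⟩ : (0:ℝ) ∈ Ico (0:ℝ) 1),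
    self_mem_nhdsWithin] with r hr hr'
  obtain ⟨hr0, hr1⟩ := hr
  have hd1 : (0:ℝ) < r ^ (-(1/(2*(α - 1))) - ε) := Real.rpow_pos_of_pos hr0 _
  have hd2 : (0:ℝ) < r ^ (-(1/(2*(α - 1))) - ε') := Real.rpow_pos_of_pos hr0 _
  have hdle : r ^ (-(1/(2*(α - 1))) - ε') ≤ r ^ (-(1/(2*(α - 1))) - ε) :=
    Real.rpow_le_rpow_of_exponent_ge hr0 hr1.le (by linarith)
  rw [Real.norm_eq_abs, Real.norm_eq_abs, abs_div, abs_div, abs_of_pos hd1, abs_of_pos hd2]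
  exact div_le_div_of_nonneg_left (abs_nonneg _) hd2 hdle
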